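/- Let G = (V, E, ends) be a multigraph and let a : V → ℕ. The point (a_v)_{v∈V} ∈ ℝ^V is an extreme point of the score vector polytope P_G if and only if there is exactly one partial orientation of G whose score vector is a. -/

import Mathlib

open Finset


/-- The degree `κ_S` of a subset `S` of vertices of a multigraph `(V, E, ends)`. -/
def multigraphKappa {V E : Type*} [Fintype E] [DecidableEq V]
    (ends : E → Sym2 V) (S : Finset V) : ℕ :=
  (Finset.univ.filter fun e => ∃ v ∈ S, v ∈ ends e).card

/-- A partial orientation of a multigraph. -/
def IsPartialOrientation {V E : Type*} (ends : E → Sym2 V) (o : E → Option V) : Prop :=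
  ∀ e v, o e = some v → v ∈ ends e

/-- The score vector of a partial orientation. -/
def scoreVector {V E : Type*} [Fintype E] [DecidableEq V]
    (o : E → Option V) (v : V) : ℕ :=
  (Finset.univ.filter fun e => o e = some v).card

/-- The score vector polytope of a multigraph. -/
def scorePolytope {V E : Type*} [Fintype E] [DecidableEq V]
    (ends : E → Sym2 V) : Set (V → ℝ) :=
  {x | (∀ v : V, 0 ≤ x v) ∧
    ∀ S : Finset V, ∑ v ∈ S, x v ≤ (multigraphKappa ends S : ℝ)}


section Aux
variable {V E : Type*} [Fintype E] [DecidableEq V]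



private def cnt (q : E → Option V) (t : Option V) : ℕ :=
  (Finset.univ.filter fun e => q e = t).card

private def mix (p q : E → Option V) (F : Finset E) [DecidableEq E] : E → Option V :=
  fun e => if e ∈ F then p e else q e

private lemma cnt_eq_sum (q : E → Option V) (t : Option V) :
    cnt q t = ∑ e : E, (if q e = t then 1 else 0) := by
  rw [cnt, Finset.card_filter]

private lemma mix_cnt_add [DecidableEq E] (p q : E → Option V) (F : Finset E) (t : Option V) :
    cnt (mix p q F) t + cnt (mix q p F) t = cnt p t + cnt q t := by
  simp only [cnt_eq_sum, ← Finset.sum_add_distrib]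
  refine Finset.sum_congr rfl fun e _ => ?_
  by_cases h : e ∈ F <;> simp [mix, h] <;> omega

private lemma cnt_update [DecidableEq E] (q : E → Option V) (e : E) (t s : Option V)
    (hne : q e ≠ t) :
    cnt (Function.update q e t) s + (if s = q e then 1 else 0)
      = cnt q s + (if s = t then 1 else 0) := by
  have h1 : ∀ (g : E → Option V), (∑ e' : E, if g e' = s then 1 else 0)
      = (if g e = s then 1 else 0) + ∑ e' ∈ Finset.univ.erase e, (if g e' = s then 1 else 0) :=
    fun g => (Finset.add_sum_erase _ _ (Finset.mem_univ e)).symm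
  simp only [cnt_eq_sum, h1]
  have h2 : (∑ e' ∈ Finset.univ.erase e, if Function.update q e t e' = s then 1 else 0)
      = ∑ e' ∈ Finset.univ.erase e, (if q e' = s then 1 else 0) :=
    Finset.sum_congr rfl fun f hf => by rw [Function.update_of_ne (Finset.ne_of_mem_erase hf)]
  rw [h2, Function.update_self]
  have flip : ∀ (x y : Option V), (if x = y then (1:ℕ) else 0) = if y = x then 1 else 0 := by
    intro x y; by_cases h : x = y
    · simp [h]
    · simp [h, Ne.symm h]
  rw [flip t s, flip (q e) s]
  split_ifs <;> (try simp_all) <;> omega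

private lemma exchange [DecidableEq E] (p : E → Option V) :
    ∀ (n : ℕ) (q : E → Option V) (t : Option V),
      (Finset.univ.filter fun e => p e ≠ q e).card ≤ n →
      cnt q t < cnt p t →
      ∃ (w : Option V) (F : Finset E),
        cnt p w < cnt q w ∧
        ∀ x : V, cnt (mix p q F) (some x) + (if some x = w then 1 else 0)
          = cnt q (some x) + (if some x = t then 1 else 0) := by
  intro n
  induction n with
  | zero =>
    intro q t hcard hlt
    exfalso
    have hpq : p = q := by
      funext f
      by_contra hf
      have : f ∈ Finset.univ.filter fun e => p e ≠ q e := by simp [hf]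
      have := Finset.card_pos.2 ⟨f, this⟩
      omega
    rw [hpq] at hlt; omega
  | succ n ih =>
    intro q t hcard hlt
    -- find an edge e with p e = t, q e ≠ t
    have hex : ∃ e, p e = t ∧ q e ≠ t := by
      by_contra hno
      push_neg at hno
      have hsub : (Finset.univ.filter fun e => p e = t) ⊆
          Finset.univ.filter fun e => q e = t := by
        intro f hf
        simp only [Finset.mem_filter, Finset.mem_univ, true_and] at *
        exact hno f hf
      have := Finset.card_le_card hsub
      simp only [cnt] at hlt
      omega
    obtain ⟨e, he1, he2⟩ := hex
    have hz : q e ≠ t := he2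
    set q₁ : E → Option V := Function.update q e t with hq₁
    by_cases hterm : cnt p (q e) < cnt q (q e)
    · refine ⟨q e, {e}, hterm, fun x => ?_⟩
      have hmix : mix p q ({e} : Finset E) = q₁ := by
        funext f
        by_cases hfe : f = e
        · subst hfe; simp [mix, hq₁, he1]
        · simp [mix, hfe, hq₁, Function.update_of_ne hfe]
      rw [hmix]
      exact cnt_update q e t (some x) hz
    · -- recurse
      have hcard' : (Finset.univ.filter fun f => p f ≠ q₁ f).card ≤ n := by
        have hset : (Finset.univ.filter fun f => p f ≠ q₁ f)
            = (Finset.univ.filter fun f => p f ≠ q f).erase e := by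
          ext f
          by_cases hfe : f = e
          · subst hfe; simp [hq₁, he1]
          · simp [hfe, hq₁, Function.update_of_ne hfe]
        have hmem : e ∈ Finset.univ.filter fun f => p f ≠ q f := by
          simp only [Finset.mem_filter, Finset.mem_univ, true_and, he1]
          exact fun h => hz h.symm
        rw [hset, Finset.card_erase_of_mem hmem]
        omega
      have hupz := cnt_update q e t (q e) hz
      rw [if_pos rfl, if_neg hz, ← hq₁] at hupz
      have hlt' : cnt q₁ (q e) < cnt p (q e) := by omega
      obtain ⟨w, F₁, hw, hid⟩ := ih q₁ (q e) hcard' hlt'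
      refine ⟨w, insert e F₁, ?_, fun x => ?_⟩
      · -- cnt p w < cnt q w
        have hupw := cnt_update q e t w hz
        rw [← hq₁] at hupw
        by_cases hwt : w = t
        · subst hwt
          rw [if_neg (Ne.symm hz), if_pos rfl] at hupw
          omega
        · rw [if_neg hwt] at hupw
          by_cases hwz : w = q e
          · rw [if_pos hwz] at hupw; omega
          · rw [if_neg hwz] at hupw; omega
      · have hmix : mix p q (insert e F₁) = mix p q₁ F₁ := by
          funext f
          by_cases hfe : f = e
          · subst hfe
            by_cases hf1 : f ∈ F₁ <;> simp [mix, hf1, hq₁, he1]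
          · by_cases hf1 : f ∈ F₁ <;>
              simp [mix, hf1, hfe, hq₁, Function.update_of_ne hfe]
        rw [hmix]
        exact (hid x).trans (cnt_update q e t (some x) hz)

private lemma score_le_kappa (ends : E → Sym2 V) (o : E → Option V)
    (ho : IsPartialOrientation ends o) (S : Finset V) :
    ∑ v ∈ S, scoreVector o v ≤ multigraphKappa ends S := by
  classical
  have hdisj : ∀ v ∈ S, ∀ w ∈ S, v ≠ w →
      Disjoint (Finset.univ.filter fun e => o e = some v)
        (Finset.univ.filter fun e => o e = some w) := by
    intro v _ w _ hvw
    rw [Finset.disjoint_left]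
    intro e hev hew
    simp only [Finset.mem_filter] at hev hew
    exact hvw (by rw [hev.2] at hew; exact (Option.some_injective V hew.2))
  have hcard : ∑ v ∈ S, scoreVector o v
      = (S.biUnion fun v => Finset.univ.filter fun e => o e = some v).card :=
    (Finset.card_biUnion hdisj).symm
  rw [hcard, multigraphKappa]
  apply Finset.card_le_card
  intro e he
  simp only [Finset.mem_biUnion, Finset.mem_filter, Finset.mem_univ, true_and] at he ⊢
  obtain ⟨v, hv, hev⟩ := he
  exact ⟨v, hv, ho e v hev⟩

private lemma exists_orientation [Fintype V] (ends : E → Sym2 V) (a : V → ℕ)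
    (h : ∀ S : Finset V, ∑ v ∈ S, a v ≤ multigraphKappa ends S) :
    ∃ o : E → Option V, IsPartialOrientation ends o ∧ scoreVector o = a := by
  classical
  set t : (Σ v : V, Fin (a v)) → Finset E :=
    (fun x => Finset.univ.filter fun e => x.1 ∈ ends e) with ht
  have hall : ∀ s : Finset (Σ v : V, Fin (a v)), s.card ≤ (s.biUnion t).card := by
    intro s
    set S := s.image Sigma.fst with hS
    have h1 : s.card ≤ ∑ v ∈ S, a v := by
      have hsub : s ⊆ S.sigma fun v => (Finset.univ : Finset (Fin (a v))) := by
        intro x hx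
        rw [Finset.mem_sigma]
        exact ⟨Finset.mem_image_of_mem _ hx, Finset.mem_univ _⟩
      calc s.card ≤ _ := Finset.card_le_card hsub
        _ = ∑ v ∈ S, a v := by rw [Finset.card_sigma]; simp
    have h2 : s.biUnion t = Finset.univ.filter fun e => ∃ v ∈ S, v ∈ ends e := by
      ext e
      simp only [Finset.mem_biUnion, Finset.mem_filter, Finset.mem_univ, true_and, ht, hS,
        Finset.mem_image]
      constructor
      · rintro ⟨x, hx, he⟩
        exact ⟨x.1, ⟨x, hx, rfl⟩, he⟩
      · rintro ⟨v, ⟨x, hx, rfl⟩, he⟩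
        exact ⟨x, hx, he⟩
    rw [h2]
    exact h1.trans (h S)
  obtain ⟨f, hfinj, hft⟩ := (Finset.all_card_le_biUnion_card_iff_exists_injective t).1 hall
  refine ⟨fun e => if he : ∃ x, f x = e then some he.choose.1 else none, ?_, ?_⟩
  · intro e v hev
    replace hev : (if he : ∃ x, f x = e then some he.choose.1 else none) = some v := hev
    by_cases he : ∃ x, f x = e
    · rw [dif_pos he] at hev
      obtain rfl : he.choose.1 = v := Option.some_injective V hev
      have := hft he.choose
      rw [ht] at this
      simp only [Finset.mem_filter] at this
      rw [he.choose_spec] at this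
      exact this.2
    · rw [dif_neg he] at hev
      cases hev
  · funext v
    have hfilter : (Finset.univ.filter fun e =>
        (if he : ∃ x, f x = e then some he.choose.1 else none) = some v)
        = Finset.univ.image fun i : Fin (a v) => f ⟨v, i⟩ := by
      ext e
      simp only [Finset.mem_filter, Finset.mem_univ, true_and, Finset.mem_image]
      constructor
      · intro heq
        by_cases he : ∃ x, f x = e
        · rw [dif_pos he] at heq
          have hv : he.choose.1 = v := Option.some_injective V heq
          subst hv
          exact ⟨he.choose.2, by rw [Sigma.eta]; exact he.choose_spec⟩
        · rw [dif_neg he] at heq; cases heq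
      · rintro ⟨i, rfl⟩
        have he : ∃ x, f x = f ⟨v, i⟩ := ⟨⟨v, i⟩, rfl⟩
        rw [dif_pos he]
        have : he.choose = ⟨v, i⟩ := hfinj he.choose_spec
        rw [this]
    rw [scoreVector, hfilter, Finset.card_image_of_injective _ (fun i j hij => sigma_mk_injective (hfinj hij))]
    simp

private lemma cnt_some (q : E → Option V) (v : V) : cnt q (some v) = scoreVector q v := rfl

private lemma ite_eq_comm {α : Sort*} [DecidableEq α] (y z : α) :
    (if y = z then (1:ℕ) else 0) = if z = y then 1 else 0 := by
  by_cases h : y = z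
  · simp [h]
  · simp [h, Ne.symm h]

private lemma cnt_none_add [Fintype V] (q : E → Option V) :
    cnt q none + ∑ x : V, cnt q (some x) = Fintype.card E := by
  classical
  simp only [cnt_eq_sum]
  rw [Finset.sum_comm, ← Finset.sum_add_distrib]
  have hpt : ∀ e : E, ((if q e = none then 1 else 0)
      + ∑ x : V, if q e = some x then 1 else 0) = 1 := by
    intro e
    cases hqe : q e with
    | none => simp
    | some v => simp [hqe]
  rw [Finset.sum_congr rfl fun e _ => hpt e, Finset.sum_const, smul_eq_mul, mul_one,
    Finset.card_univ]

private lemma not_unique [Fintype V] (ends : E → Sym2 V) (a : V → ℕ) (u : V) (tv : Option V)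
    (htvu : tv ≠ some u) (b c : V → ℕ)
    (Hb : ∀ x, b x + (if tv = some x then 1 else 0) = a x + (if u = x then 1 else 0))
    (Hc : ∀ x, c x + (if u = x then 1 else 0) = a x + (if tv = some x then 1 else 0))
    (Pb : ∀ S : Finset V, ∑ v ∈ S, b v ≤ multigraphKappa ends S)
    (Pc : ∀ S : Finset V, ∑ v ∈ S, c v ≤ multigraphKappa ends S) :
    ¬ ∃! o : E → Option V, IsPartialOrientation ends o ∧ scoreVector o = a := by
  classical
  rintro ⟨o, ⟨ho, hao⟩, huniq⟩
  obtain ⟨ob, hob, hsb⟩ := exists_orientation ends b Pb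
  obtain ⟨oc, hoc, hsc⟩ := exists_orientation ends c Pc
  -- b u = a u + 1 and c u + 1 = a u
  have hbu : b u = a u + 1 := by
    have h1 := Hb u
    rw [if_neg htvu, if_pos rfl] at h1
    omega
  have hcu : c u + 1 = a u := by
    have h1 := Hc u
    rw [if_neg htvu, if_pos rfl] at h1
    omega
  have hlt : cnt oc (some u) < cnt ob (some u) := by
    rw [cnt_some, cnt_some, hsb, hsc]
    omega
  obtain ⟨w, F, hw, hid⟩ := exchange ob _ oc (some u) le_rfl hlt
  set r₁ := mix ob oc F with hr₁
  set r₂ := mix oc ob F with hr₂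
  have hor₁ : IsPartialOrientation ends r₁ := by
    intro e v hev
    rw [hr₁, mix] at hev
    by_cases he : e ∈ F
    · rw [if_pos he] at hev; exact hob e v hev
    · rw [if_neg he] at hev; exact hoc e v hev
  have hor₂ : IsPartialOrientation ends r₂ := by
    intro e v hev
    rw [hr₂, mix] at hev
    by_cases he : e ∈ F
    · rw [if_pos he] at hev; exact hoc e v hev
    · rw [if_neg he] at hev; exact hob e v hev
  -- the score of r₁ is a
  have hsr₁ : scoreVector r₁ = a := by
    funext x
    have h1 := hid x
    rw [cnt_some, cnt_some, hsc] at h1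
    simp only [Option.some.injEq] at h1
    rcases hww : w with _ | v'
    · -- w = none : possible only when tv = none
      rw [hww] at hw h1
      replace h1 : scoreVector r₁ x = c x + (if x = u then 1 else 0) := by
        simpa using h1
      rcases htv : tv with _ | v''
      · -- tv = none
        have h2 := Hc x
        rw [htv] at h2
        simp only [reduceCtorEq, if_false] at h2
        rw [ite_eq_comm x u] at h1
        split_ifs at h1 h2 <;> omega
      · -- tv = some v'' : then the total scores of b and c are equal, contradicting hw
        exfalso
        have hnb := cnt_none_add ob
        have hnc := cnt_none_add oc
        have hsumb : ∑ x : V, cnt ob (some x) = ∑ x : V, b x :=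
          Finset.sum_congr rfl fun x _ => by rw [cnt_some, hsb]
        have hsumc : ∑ x : V, cnt oc (some x) = ∑ x : V, c x :=
          Finset.sum_congr rfl fun x _ => by rw [cnt_some, hsc]
        rw [hsumb] at hnb
        rw [hsumc] at hnc
        rw [htv] at Hb Hc
        simp only [Option.some.injEq] at Hb Hc
        have hsb2 : (∑ x : V, b x) + 1 = (∑ x : V, a x) + 1 := by
          have h4 := Finset.sum_congr rfl fun x (_ : x ∈ Finset.univ) => Hb x
          rw [Finset.sum_add_distrib, Finset.sum_add_distrib,
            Finset.sum_ite_eq Finset.univ v'' (fun _ => 1),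
            Finset.sum_ite_eq Finset.univ u (fun _ => 1)] at h4
          simpa using h4
        have hsc2 : (∑ x : V, c x) + 1 = (∑ x : V, a x) + 1 := by
          have h4 := Finset.sum_congr rfl fun x (_ : x ∈ Finset.univ) => Hc x
          rw [Finset.sum_add_distrib, Finset.sum_add_distrib,
            Finset.sum_ite_eq Finset.univ u (fun _ => 1),
            Finset.sum_ite_eq Finset.univ v'' (fun _ => 1)] at h4
          simpa using h4
        omega
    · -- w = some v'
      rw [hww] at hw h1
      rw [cnt_some, cnt_some, hsb, hsc] at hw
      have htv : tv = some v' := by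
        by_contra htv'
        have h2 := Hb v'
        have h3 := Hc v'
        rw [if_neg htv'] at h2 h3
        omega
      rw [htv] at Hb Hc
      simp only [Option.some.injEq] at Hb Hc h1
      have h2 := Hc x
      have h4 := Hb v'
      have h5 := Hc v'
      rw [if_pos rfl] at h4 h5
      rw [ite_eq_comm x v', ite_eq_comm x u] at h1
      split_ifs at h1 h2 h4 h5 <;> omega
  -- the score of r₂ is a
  have hbc2 : ∀ x, b x + c x = 2 * a x := by
    intro x
    have h1 := Hb x
    have h2 := Hc x
    omega
  have hsr₂ : scoreVector r₂ = a := by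
    funext x
    have hm := mix_cnt_add ob oc F (some x)
    rw [← hr₁, ← hr₂, cnt_some, cnt_some, cnt_some, cnt_some, hsb, hsc, hsr₁] at hm
    have := hbc2 x
    omega
  -- both r₁ and r₂ equal o, hence ob = oc, contradiction
  have he₁ : r₁ = o := huniq r₁ ⟨hor₁, hsr₁⟩
  have he₂ : r₂ = o := huniq r₂ ⟨hor₂, hsr₂⟩
  have hbc_eq : ob = oc := by
    funext e
    have h12 : r₁ e = r₂ e := by rw [he₁, he₂]
    rw [hr₁, hr₂, mix, mix] at h12
    by_cases he : e ∈ F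
    · rw [if_pos he, if_pos he] at h12; exact h12
    · rw [if_neg he, if_neg he] at h12; exact h12.symm
  have : b u = c u := by rw [← hsb, ← hsc, hbc_eq]
  omega
private lemma kappa_submodular (ends : E → Sym2 V) (A B : Finset V) :
    multigraphKappa ends (A ∪ B) + multigraphKappa ends (A ∩ B)
      ≤ multigraphKappa ends A + multigraphKappa ends B := by
  classical
  simp only [multigraphKappa, Finset.card_filter]
  rw [← Finset.sum_add_distrib, ← Finset.sum_add_distrib]
  refine Finset.sum_le_sum fun e _ => ?_
  by_cases hA : ∃ v ∈ A, v ∈ ends e <;> by_cases hB : ∃ v ∈ B, v ∈ ends e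
  · have hU : ∃ v ∈ A ∪ B, v ∈ ends e := by
      obtain ⟨v, hv, hve⟩ := hA
      exact ⟨v, Finset.mem_union_left _ hv, hve⟩
    simp only [if_pos hA, if_pos hB, if_pos hU]
    split_ifs <;> omega
  · have hI : ¬ ∃ v ∈ A ∩ B, v ∈ ends e := by
      rintro ⟨v, hv, hve⟩
      exact hB ⟨v, (Finset.mem_inter.1 hv).2, hve⟩
    simp only [if_pos hA, if_neg hB, if_neg hI]
    split_ifs <;> omega
  · have hI : ¬ ∃ v ∈ A ∩ B, v ∈ ends e := by
      rintro ⟨v, hv, hve⟩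
      exact hA ⟨v, (Finset.mem_inter.1 hv).1, hve⟩
    simp only [if_pos hB, if_neg hA, if_neg hI]
    split_ifs <;> omega
  · have hI : ¬ ∃ v ∈ A ∩ B, v ∈ ends e := by
      rintro ⟨v, hv, hve⟩
      exact hA ⟨v, (Finset.mem_inter.1 hv).1, hve⟩
    have hU : ¬ ∃ v ∈ A ∪ B, v ∈ ends e := by
      rintro ⟨v, hv, hve⟩
      rcases Finset.mem_union.1 hv with h | h
      · exact hA ⟨v, h, hve⟩
      · exact hB ⟨v, h, hve⟩
    simp only [if_neg hA, if_neg hB, if_neg hI, if_neg hU]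
    omega
end Aux

theorem extremePoint_scorePolytope_iff_unique_orientation
    {V E : Type*} [Fintype V] [Fintype E] [DecidableEq V]
    (ends : E → Sym2 V) (a : V → ℕ) :
    (fun v => (a v : ℝ)) ∈ Set.extremePoints ℝ (scorePolytope ends) ↔
      ∃! o : E → Option V, IsPartialOrientation ends o ∧ scoreVector o = a := by
  classical
  have hmemp : ∀ p : E → Option V, IsPartialOrientation ends p →
      (fun v => (scoreVector p v : ℝ)) ∈ scorePolytope ends := by
    intro p hp
    refine ⟨fun v => Nat.cast_nonneg _, fun S => ?_⟩
    have := score_le_kappa ends p hp S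
    push_cast
    exact_mod_cast this
  constructor
  · -- extreme point implies unique orientation
    intro hext
    obtain ⟨⟨hnn, hsums⟩, hmid⟩ := mem_extremePoints.1 hext
    have hNat : ∀ S : Finset V, ∑ v ∈ S, a v ≤ multigraphKappa ends S := by
      intro S
      have h1 := hsums S
      beta_reduce at h1
      exact_mod_cast h1
    obtain ⟨o, ho, hso⟩ := exists_orientation ends a hNat
    refine ⟨o, ⟨ho, hso⟩, ?_⟩
    rintro o' ⟨ho', hso'⟩
    by_contra hne
    obtain ⟨e, hee⟩ := Function.ne_iff.1 hne
    set p₁ := mix o o' ({e} : Finset E) with hp₁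
    set p₂ := mix o' o ({e} : Finset E) with hp₂
    have hop₁ : IsPartialOrientation ends p₁ := by
      intro f v hfv
      rw [hp₁, mix] at hfv
      by_cases hf : f ∈ ({e} : Finset E)
      · rw [if_pos hf] at hfv; exact ho f v hfv
      · rw [if_neg hf] at hfv; exact ho' f v hfv
    have hop₂ : IsPartialOrientation ends p₂ := by
      intro f v hfv
      rw [hp₂, mix] at hfv
      by_cases hf : f ∈ ({e} : Finset E)
      · rw [if_pos hf] at hfv; exact ho' f v hfv
      · rw [if_neg hf] at hfv; exact ho f v hfv
    have hsum2 : ∀ x, scoreVector p₁ x + scoreVector p₂ x = 2 * a x := by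
      intro x
      have hm := mix_cnt_add o o' ({e} : Finset E) (some x)
      rw [← hp₁, ← hp₂, cnt_some, cnt_some, cnt_some, cnt_some, hso, hso'] at hm
      omega
    have hup : p₁ = Function.update o' e (o e) := by
      funext f
      by_cases hfe : f = e
      · subst hfe; simp [hp₁, mix]
      · simp [hp₁, mix, hfe, Function.update_of_ne hfe]
    have hne1 : scoreVector p₁ ≠ a := by
      intro hcontra
      rcases hoe : o' e with _ | v₁
      · rcases hoe2 : o e with _ | v₁
        · rw [hoe, hoe2] at hee; exact hee rfl
        · have hcu := cnt_update o' e (o e) (some v₁) (fun h => hee h)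
          rw [← hup, hoe, hoe2] at hcu
          simp only [reduceCtorEq, if_false, if_true, eq_self_iff_true] at hcu
          rw [cnt_some, cnt_some, hso', hcontra] at hcu
          omega
      · have hcu := cnt_update o' e (o e) (some v₁) (fun h => hee h)
        rw [← hup, hoe] at hcu
        rw [if_pos rfl, if_neg (fun h => hee (hoe.trans h))] at hcu
        rw [cnt_some, cnt_some, hso', hcontra] at hcu
        omega
    have hseg : (fun v => (a v : ℝ)) ∈
        openSegment ℝ (fun v => (scoreVector p₁ v : ℝ)) (fun v => (scoreVector p₂ v : ℝ)) := by
      refine ⟨1/2, 1/2, by norm_num, by norm_num, by norm_num, ?_⟩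
      funext v
      have h1 := hsum2 v
      have h2 : (scoreVector p₁ v : ℝ) + (scoreVector p₂ v : ℝ) = 2 * (a v : ℝ) := by
        exact_mod_cast h1
      simp only [Pi.add_apply, Pi.smul_apply, smul_eq_mul]
      linarith
    have hkey := hmid _ (hmemp p₁ hop₁) _ (hmemp p₂ hop₂) hseg
    apply hne1
    funext v
    have h2 := congrFun hkey.1 v
    exact_mod_cast h2
  · -- unique orientation implies extreme point
    rintro ⟨o, ⟨ho, hso⟩, huniq⟩
    have hNat : ∀ S : Finset V, ∑ v ∈ S, a v ≤ multigraphKappa ends S := by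
      intro S
      rw [← hso]
      exact score_le_kappa ends o ho S
    rw [mem_extremePoints]
    refine ⟨⟨fun v => Nat.cast_nonneg _, fun S => by beta_reduce; exact_mod_cast hNat S⟩, ?_⟩
    rintro x ⟨hxnn, hxsum⟩ y ⟨hynn, hysum⟩ ⟨t₁, t₂, ht₁, ht₂, hts, heq⟩
    have hxy : ∀ v, t₁ * x v + t₂ * y v = (a v : ℝ) := by
      intro v
      have h1 := congrFun heq v
      simpa using h1
    suffices hxa : x = fun v => (a v : ℝ) by
      refine ⟨hxa, ?_⟩
      funext v
      have h1 := hxy v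
      have h2 := congrFun hxa v
      have ht2' : t₂ ≠ 0 := ne_of_gt ht₂
      have h3 : t₂ * y v = t₂ * (a v : ℝ) := by
        rw [h2] at h1; nlinarith
      exact mul_left_cancel₀ ht2' h3
    by_contra hne
    obtain ⟨u₀, hu₀⟩ := Function.ne_iff.1 hne
    set d : V → ℝ := fun v => x v - (a v : ℝ) with hd
    have hdu₀ : d u₀ ≠ 0 := sub_ne_zero.2 hu₀
    have hyv : ∀ v, y v = (a v : ℝ) - (t₁ / t₂) * d v := by
      intro v
      have h1 := hxy v
      have ht2' : t₂ ≠ 0 := ne_of_gt ht₂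
      have hmul : t₂ * (t₁ / t₂) = t₁ := by field_simp
      have key : t₂ * ((a v : ℝ) - t₁ / t₂ * d v) = t₂ * y v := by
        have expand : t₂ * ((a v : ℝ) - t₁ / t₂ * d v)
            = t₂ * (a v : ℝ) - (t₂ * (t₁ / t₂)) * d v := by ring
        rw [expand, hmul]
        simp only [hd]
        linear_combination -h1 + (a v : ℝ) * hts
      exact (mul_left_cancel₀ ht2' key).symm
    have hdzero : ∀ v, a v = 0 → d v = 0 := by
      intro v hv
      have h1 : 0 ≤ d v := by
        have := hxnn v
        simp [hd, hv]
        linarith [hxnn v]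
      have h2 : 0 ≤ (a v : ℝ) - (t₁ / t₂) * d v := by rw [← hyv v]; exact hynn v
      have hε : 0 < t₁ / t₂ := div_pos ht₁ ht₂
      rw [hv] at h2
      simp only [Nat.cast_zero, zero_sub, neg_nonneg] at h2
      have h3 : d v ≤ 0 := by
        by_contra h4
        push_neg at h4
        nlinarith [mul_pos (div_pos ht₁ ht₂) h4]
      linarith
    have hpos : ∀ v, d v ≠ 0 → 1 ≤ a v := by
      intro v hv
      rcases Nat.eq_zero_or_pos (a v) with h | h
      · exact absurd (hdzero v h) hv
      · exact h
    have htight : ∀ S : Finset V, ∑ v ∈ S, a v = multigraphKappa ends S →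
        ∑ v ∈ S, d v = 0 := by
      intro S hS
      have hcast : (∑ v ∈ S, (a v : ℝ)) = (multigraphKappa ends S : ℝ) := by
        exact_mod_cast hS
      have hdx : ∑ v ∈ S, d v = ∑ v ∈ S, x v - ∑ v ∈ S, (a v : ℝ) := by
        rw [hd, Finset.sum_sub_distrib]
      have h1 : ∑ v ∈ S, d v ≤ 0 := by
        have := hxsum S
        rw [hdx, hcast]
        linarith
      have hyd : ∑ v ∈ S, y v = ∑ v ∈ S, (a v : ℝ) - (t₁ / t₂) * ∑ v ∈ S, d v := by
        rw [Finset.mul_sum, ← Finset.sum_sub_distrib]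
        exact Finset.sum_congr rfl fun v _ => hyv v
      have hε : 0 < t₁ / t₂ := div_pos ht₁ ht₂
      have h4 : 0 ≤ (t₁ / t₂) * ∑ v ∈ S, d v := by
        have := hysum S
        linarith [hyd, hcast]
      nlinarith
    -- dichotomy on whether some tight set supports d
    by_cases hT : ∃ T : Finset V,
        (∑ v ∈ T, a v = multigraphKappa ends T) ∧ ∃ v ∈ T, d v ≠ 0
    · -- Case B : minimal tight set where d is nonzero
      obtain ⟨T₀, hT₀⟩ := hT
      obtain ⟨T, hTmem, hTmin⟩ := Finset.exists_min_image
        (Finset.univ.filter fun T : Finset V =>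
          (∑ v ∈ T, a v = multigraphKappa ends T) ∧ ∃ v ∈ T, d v ≠ 0)
        Finset.card ⟨T₀, by simp only [Finset.mem_filter, Finset.mem_univ, true_and]; exact hT₀⟩
      simp only [Finset.mem_filter, Finset.mem_univ, true_and] at hTmem
      obtain ⟨hTt, hTex⟩ := hTmem
      have hsum0 : ∑ v ∈ T, d v = 0 := htight T hTt
      have hu : ∃ u ∈ T, 0 < d u := by
        by_contra hno
        push_neg at hno
        have := (Finset.sum_eq_zero_iff_of_nonpos hno).1 hsum0
        obtain ⟨v, hv, hvne⟩ := hTex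
        exact hvne (this v hv)
      have hv : ∃ v ∈ T, d v < 0 := by
        by_contra hno
        push_neg at hno
        have := (Finset.sum_eq_zero_iff_of_nonneg hno).1 hsum0
        obtain ⟨v, hv, hvne⟩ := hTex
        exact hvne (this v hv)
      obtain ⟨u, huT, hdu⟩ := hu
      obtain ⟨v, hvT, hdv⟩ := hv
      have huv : u ≠ v := fun h => by rw [h] at hdu; linarith
      have hau : 1 ≤ a u := hpos u (ne_of_gt hdu)
      have hav : 1 ≤ a v := hpos v (ne_of_lt hdv)
      have hiff : ∀ S : Finset V, (∑ w ∈ S, a w = multigraphKappa ends S) →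
          (u ∈ S ↔ v ∈ S) := by
        intro S hS
        have k1 := kappa_submodular ends S T
        have k2 := Finset.sum_union_inter (s₁ := S) (s₂ := T) (f := a)
        have k3 := hNat (S ∪ T)
        have k4 := hNat (S ∩ T)
        have hST : ∑ w ∈ S ∩ T, a w = multigraphKappa ends (S ∩ T) := by omega
        have hgen : ∀ z ∈ T, d z ≠ 0 → z ∈ S → (S ∩ T).card < T.card → False := by
          intro z hzT hzd hzS hlt
          have hmemP : S ∩ T ∈ Finset.univ.filter fun T' : Finset V =>
              (∑ w ∈ T', a w = multigraphKappa ends T') ∧ ∃ w ∈ T', d w ≠ 0 := by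
            simp only [Finset.mem_filter, Finset.mem_univ, true_and]
            exact ⟨hST, ⟨z, Finset.mem_inter.2 ⟨hzS, hzT⟩, hzd⟩⟩
          have := hTmin _ hmemP
          omega
        constructor
        · intro huS
          by_contra hvS
          refine hgen u huT (ne_of_gt hdu) huS (Finset.card_lt_card ?_)
          exact ⟨Finset.inter_subset_right, fun hsub =>
            hvS ((Finset.mem_inter.1 (hsub hvT)).1)⟩
        · intro hvS
          by_contra huS
          refine hgen v hvT (ne_of_lt hdv) hvS (Finset.card_lt_card ?_)
          exact ⟨Finset.inter_subset_right, fun hsub =>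
            huS ((Finset.mem_inter.1 (hsub huT)).1)⟩
      set b : V → ℕ := fun z => if z = u then a z + 1 else if z = v then a z - 1 else a z
        with hb
      set c : V → ℕ := fun z => if z = u then a z - 1 else if z = v then a z + 1 else a z
        with hc
      have Hb : ∀ z, b z + (if (some v : Option V) = some z then 1 else 0)
          = a z + (if u = z then 1 else 0) := by
        intro z
        rw [ite_eq_comm (some v : Option V) (some z), ite_eq_comm u z]
        simp only [hb, Option.some.injEq]
        by_cases h1 : z = u <;> by_cases h2 : z = v <;>
          simp [h1, h2, huv, Ne.symm huv] <;> omega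
      have Hc : ∀ z, c z + (if u = z then 1 else 0)
          = a z + (if (some v : Option V) = some z then 1 else 0) := by
        intro z
        rw [ite_eq_comm u z, ite_eq_comm (some v : Option V) (some z)]
        simp only [hc, Option.some.injEq]
        by_cases h1 : z = u <;> by_cases h2 : z = v <;>
          simp [h1, h2, huv, Ne.symm huv] <;> omega
      have hsplitb : ∀ S : Finset V, ∑ z ∈ S, b z + (if v ∈ S then 1 else 0)
          = ∑ z ∈ S, a z + (if u ∈ S then 1 else 0) := by
        intro S
        have hpt : ∀ z ∈ S, b z + (if z = v then 1 else 0)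
            = a z + (if z = u then 1 else 0) := by
          intro z _
          simp only [hb]
          by_cases h1 : z = u <;> by_cases h2 : z = v <;>
            simp [h1, h2, huv, Ne.symm huv] <;> omega
        have hsum := Finset.sum_congr rfl hpt
        rw [Finset.sum_add_distrib, Finset.sum_add_distrib,
          Finset.sum_ite_eq' S v (fun _ => 1), Finset.sum_ite_eq' S u (fun _ => 1)] at hsum
        exact hsum
      have hsplitc : ∀ S : Finset V, ∑ z ∈ S, c z + (if u ∈ S then 1 else 0)
          = ∑ z ∈ S, a z + (if v ∈ S then 1 else 0) := by
        intro S
        have hpt : ∀ z ∈ S, c z + (if z = u then 1 else 0)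
            = a z + (if z = v then 1 else 0) := by
          intro z _
          simp only [hc]
          by_cases h1 : z = u <;> by_cases h2 : z = v <;>
            simp [h1, h2, huv, Ne.symm huv] <;> omega
        have hsum := Finset.sum_congr rfl hpt
        rw [Finset.sum_add_distrib, Finset.sum_add_distrib,
          Finset.sum_ite_eq' S u (fun _ => 1), Finset.sum_ite_eq' S v (fun _ => 1)] at hsum
        exact hsum
      have Pb : ∀ S : Finset V, ∑ z ∈ S, b z ≤ multigraphKappa ends S := by
        intro S
        have h1 := hsplitb S
        have h2 := hNat S
        by_cases huS : u ∈ S <;> by_cases hvS : v ∈ S <;>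
          simp only [if_pos, if_neg, huS, hvS, if_true, if_false] at h1
        · omega
        · have hnt : ∑ z ∈ S, a z ≠ multigraphKappa ends S := fun h =>
            hvS ((hiff S h).1 huS)
          omega
        · omega
        · omega
      have Pc : ∀ S : Finset V, ∑ z ∈ S, c z ≤ multigraphKappa ends S := by
        intro S
        have h1 := hsplitc S
        have h2 := hNat S
        by_cases huS : u ∈ S <;> by_cases hvS : v ∈ S <;>
          simp only [if_pos, if_neg, huS, hvS, if_true, if_false] at h1
        · omega
        · omega
        · have hnt : ∑ z ∈ S, a z ≠ multigraphKappa ends S := fun h =>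
            huS ((hiff S h).2 hvS)
          omega
        · omega
      exact not_unique ends a u (some v)
        (fun h => huv (Option.some_injective V h).symm) b c Hb Hc Pb Pc
        ⟨o, ⟨ho, hso⟩, huniq⟩
    · -- Case A : no tight set supports d
      push_neg at hT
      have hau : 1 ≤ a u₀ := hpos u₀ hdu₀
      have hnott : ∀ S : Finset V, u₀ ∈ S → ∑ z ∈ S, a z ≠ multigraphKappa ends S :=
        fun S hu hS => hdu₀ (hT S hS u₀ hu)
      set b : V → ℕ := fun z => if z = u₀ then a z + 1 else a z with hb
      set c : V → ℕ := fun z => if z = u₀ then a z - 1 else a z with hc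
      have Hb : ∀ z, b z + (if (none : Option V) = some z then 1 else 0)
          = a z + (if u₀ = z then 1 else 0) := by
        intro z
        rw [ite_eq_comm u₀ z]
        simp only [hb, reduceCtorEq, if_false]
        by_cases h1 : z = u₀ <;> simp [h1] <;> omega
      have Hc : ∀ z, c z + (if u₀ = z then 1 else 0)
          = a z + (if (none : Option V) = some z then 1 else 0) := by
        intro z
        rw [ite_eq_comm u₀ z]
        simp only [hc, reduceCtorEq, if_false]
        by_cases h1 : z = u₀ <;> simp [h1] <;> omega
      have hsplitb : ∀ S : Finset V, ∑ z ∈ S, b z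
          = ∑ z ∈ S, a z + (if u₀ ∈ S then 1 else 0) := by
        intro S
        have hpt : ∀ z ∈ S, b z = a z + (if z = u₀ then 1 else 0) := by
          intro z _
          simp only [hb]
          by_cases h1 : z = u₀ <;> simp [h1]
        have hsum := Finset.sum_congr rfl hpt
        rw [Finset.sum_add_distrib, Finset.sum_ite_eq' S u₀ (fun _ => 1)] at hsum
        exact hsum
      have Pb : ∀ S : Finset V, ∑ z ∈ S, b z ≤ multigraphKappa ends S := by
        intro S
        have h1 := hsplitb S
        have h2 := hNat S
        by_cases huS : u₀ ∈ S <;> simp only [huS, if_true, if_false] at h1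
        · have := hnott S huS
          omega
        · omega
      have Pc : ∀ S : Finset V, ∑ z ∈ S, c z ≤ multigraphKappa ends S := by
        intro S
        refine le_trans (Finset.sum_le_sum fun z _ => ?_) (hNat S)
        simp only [hc]
        by_cases h1 : z = u₀ <;> simp [h1] <;> omega
      exact not_unique ends a u₀ none (fun h => by cases h) b c Hb Hc Pb Pc
        ⟨o, ⟨ho, hso⟩, huniq⟩
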